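/- Let K and H be real inner product spaces, M ∈ ℕ, and S ⊆ K × H^M. Suppose (P̂, û¹, …, û^M) ∈ S satisfies ‖P̂‖² + Σₘ ‖ûᵐ‖² ≤ ‖G‖² + Σₘ ‖vᵐ‖² for every (G, v¹, …, v^M) ∈ S, and let (P, u¹, …, u^M) ∈ S. Further suppose ū¹, …, ū^M ∈ H satisfy ⟨uᵐ − ūᵐ, ūᵐ⟩ = 0 and ‖ūᵐ‖ ≤ ‖ûᵐ‖ for each m = 1, …, M. Then ‖P̂‖² ≤ ‖P‖² + Σₘ ‖uᵐ − ūᵐ‖². -/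

import Mathlib

/-- Key inequality for the quantitative error bound on the learned equation in
1-step kernel equation learning: if `(P̂, û)` minimizes the joint norm budget
over the feasible set `S`, `(P, u) ∈ S`, and `ūᵐ` are interpolants with
`⟨uᵐ − ūᵐ, ūᵐ⟩ = 0` and `‖ūᵐ‖ ≤ ‖ûᵐ‖`, then
`‖P̂‖² ≤ ‖P‖² + Σₘ ‖uᵐ − ūᵐ‖²`. -/
theorem one_step_equation_norm_bound
    {K H : Type*} [NormedAddCommGroup K] [InnerProductSpace ℝ K]
    [NormedAddCommGroup H] [InnerProductSpace ℝ H]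
    (M : ℕ) (S : Set (K × (Fin M → H)))
    (Phat : K) (uhat : Fin M → H) (hfeas : (Phat, uhat) ∈ S)
    (hopt : ∀ G : K, ∀ v : Fin M → H, (G, v) ∈ S →
      ‖Phat‖ ^ 2 + ∑ m, ‖uhat m‖ ^ 2 ≤ ‖G‖ ^ 2 + ∑ m, ‖v m‖ ^ 2)
    (P : K) (u : Fin M → H) (hu : (P, u) ∈ S)
    (ubar : Fin M → H)
    (horth : ∀ m, (inner ℝ (u m - ubar m) (ubar m) : ℝ) = 0)
    (hle : ∀ m, ‖ubar m‖ ≤ ‖uhat m‖) :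
    ‖Phat‖ ^ 2 ≤ ‖P‖ ^ 2 + ∑ m, ‖u m - ubar m‖ ^ 2 := by
  have key := hopt P u hu
  have pyth : ∀ m, ‖u m‖ ^ 2 = ‖u m - ubar m‖ ^ 2 + ‖ubar m‖ ^ 2 := by
    intro m
    have := norm_add_sq_real (u m - ubar m) (ubar m)
    simpa [horth m] using this
  have hsum : ∑ m, ‖u m‖ ^ 2 ≤ ∑ m, ‖u m - ubar m‖ ^ 2 + ∑ m, ‖uhat m‖ ^ 2 := by
    rw [← Finset.sum_add_distrib]
    refine Finset.sum_le_sum fun m _ => ?_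
    rw [pyth m]
    have := pow_le_pow_left₀ (norm_nonneg _) (hle m) 2
    linarith
  linarith
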